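/- Let Ω be an associative unital ℚ-algebra, let R and R' be subrings of Ω, let d ≥ 1 be an integer with d·R' ⊆ R and d·R ⊆ R', let Γ be an order of a number field L, and let Γ' = ℤ[dΓ]. Then the number of Γ-structures on R is at most |R'/dR'| times the number of Γ'-structures on R', where |R'/dR'| is the cardinality of the additive quotient group R'/dR'. -/
import Mathlib


universe u v

/-- Two unital ring homomorphisms `A → B` are conjugate if they differ by conjugation
by a unit of `B`.  A `Γ`-structure on `B` is an equivalence class for this relation. -/
def ConjRel (A B : Type*) [Ring A] [Ring B] (ρ ρ' : A →+* B) : Prop :=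
  ∃ u : Bˣ, ∀ a : A, ρ' a = ↑u * ρ a * ↑u⁻¹

/-- The additive subgroup `d·R` of (the subring) `R`. -/
def multiplesSubgroup (Ω : Type*) [Ring Ω] (R : Subring Ω) (d : ℕ) : AddSubgroup ↥R :=
  AddMonoidHom.range (d • AddMonoidHom.id ↥R)

lemma conjRel_equivalence (A B : Type*) [Ring A] [Ring B] : Equivalence (ConjRel A B) := by
  constructor
  · intro ρ
    exact ⟨1, by simp⟩
  · rintro ρ ρ' ⟨u, hu⟩
    refine ⟨u⁻¹, fun a => ?_⟩
    rw [hu a]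
    simp [mul_assoc]
  · rintro ρ₁ ρ₂ ρ₃ ⟨u, hu⟩ ⟨v, hv⟩
    refine ⟨v * u, fun a => ?_⟩
    rw [hv a, hu a]
    simp [mul_assoc]

/-- Let `Ω` be an associative unital `ℚ`-algebra, `R` and `R'`
subrings of `Ω`, `d ≥ 1` an integer with `d·R' ⊆ R` and `d·R ⊆ R'`, `Γ` an order of a
number field `L`, and `Γ' = ℤ[dΓ]`.  Then the number of `Γ`-structures on `R` is at
most `|R'/dR'|` times the number of `Γ'`-structures on `R'`. -/
theorem card_gammaStructures_le_mul
    (Ω : Type u) [Ring Ω] [Algebra ℚ Ω] (R R' : Subring Ω)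
    (L : Type v) [Field L] [NumberField L]
    (Γ : Subring L) (hΓfin : Module.Finite ℤ Γ)
    (hΓspan : Submodule.span ℚ (Γ : Set L) = ⊤)
    (d : ℕ) (hd : 1 ≤ d)
    (hdR' : ∀ x ∈ R', (d : Ω) * x ∈ R) (hdR : ∀ x ∈ R, (d : Ω) * x ∈ R')
    (Γ' : Subring L) (hΓ' : Γ' = Subring.closure ((fun γ : L => (d : L) * γ) '' (Γ : Set L))) :
    Cardinal.mk (Quot (ConjRel Γ R)) ≤
      Cardinal.lift.{v} (Cardinal.mk (↥R' ⧸ multiplesSubgroup Ω R' d)) *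
        Cardinal.mk (Quot (ConjRel Γ' R')) := by
  classical
  -- cancellation of `d` in `Ω`
  have cancel : ∀ x y : Ω, (d : Ω) * x = (d : Ω) * y → x = y := by
    intro x y h
    have hd0 : (d : ℚ) ≠ 0 := Nat.cast_ne_zero.2 (by omega)
    have h2 := congrArg (fun z => algebraMap ℚ Ω (d : ℚ)⁻¹ * z) h
    simp only [show ((d : Ω)) = algebraMap ℚ Ω (d : ℚ) by simp, ← mul_assoc, ← map_mul,
      inv_mul_cancel₀ hd0, map_one, one_mul] at h2
    exact h2
  -- `Γ' ≤ Γ`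
  have hle : Γ' ≤ Γ := by
    rw [hΓ']
    refine Subring.closure_le.2 ?_
    rintro x ⟨γ, hγ, rfl⟩
    exact Γ.mul_mem (natCast_mem Γ d) hγ
  have hdΓ' : ∀ γ : ↥Γ, (d : L) * ↑γ ∈ Γ' := by
    intro γ
    rw [hΓ']
    exact Subring.subset_closure ⟨↑γ, γ.2, rfl⟩
  -- the restriction of any `ρ : Γ →+* R` to `Γ'` lands in `R'`
  have hmem : ∀ (ρ : ↥Γ →+* ↥R) (x : ↥Γ'),
      ((R.subtype.comp ρ).comp (Subring.inclusion hle)) x ∈ R' := by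
    intro ρ x
    have hsub : Γ' ≤ (Subring.comap (R.subtype.comp ρ) R').map Γ.subtype := by
      rw [hΓ']
      refine Subring.closure_le.2 ?_
      rintro _ ⟨γ, hγ, rfl⟩
      refine ⟨(d : ℕ) • (⟨γ, hγ⟩ : ↥Γ), ?_, ?_⟩
      · show (R.subtype.comp ρ) _ ∈ R'
        rw [map_nsmul, nsmul_eq_mul]
        exact hdR _ (ρ ⟨γ, hγ⟩).2
      · show ((d : ℕ) • (⟨γ, hγ⟩ : ↥Γ) : ↥Γ).1 = (d : L) * γ
        simp [nsmul_eq_mul]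
    obtain ⟨y, hy, hyx⟩ := hsub x.2
    have hxy : Subring.inclusion hle x = y := Subtype.ext hyx.symm
    show ((ρ (Subring.inclusion hle x) : ↥R) : Ω) ∈ R'
    rw [hxy]
    exact hy
  set res : (↥Γ →+* ↥R) → (↥Γ' →+* ↥R') := fun ρ =>
    RingHom.codRestrict ((R.subtype.comp ρ).comp (Subring.inclusion hle)) R' (hmem ρ) with hres_def
  have hres : ∀ (ρ : ↥Γ →+* ↥R) (a : ↥Γ'),
      ((res ρ a : ↥R') : Ω) = ((ρ (Subring.inclusion hle a) : ↥R) : Ω) := fun _ _ => rfl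
  -- for each class `c`, compare `res c.out` with the chosen representative of its class
  have hrel : ∀ c : Quot (ConjRel ↥Γ ↥R),
      ConjRel ↥Γ' ↥R' ((Quot.mk (ConjRel ↥Γ' ↥R') (res c.out)).out) (res c.out) := by
    intro c
    have h := Quot.out_eq (Quot.mk (ConjRel ↥Γ' ↥R') (res c.out))
    exact ((conjRel_equivalence ↥Γ' ↥R').eqvGen_iff).1 (Quot.eq.1 h)
  set U : Quot (ConjRel ↥Γ ↥R) → (↥R')ˣ := fun c => (hrel c).choose with hU_def
  have hU : ∀ (c : Quot (ConjRel ↥Γ ↥R)) (a : ↥Γ'),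
      res c.out a = ↑(U c) * ((Quot.mk (ConjRel ↥Γ' ↥R') (res c.out)).out) a * ↑(U c)⁻¹ :=
    fun c => (hrel c).choose_spec
  set S := multiplesSubgroup Ω R' d with hS_def
  set F : Quot (ConjRel ↥Γ ↥R) → (↥R' ⧸ S) × Quot (ConjRel ↥Γ' ↥R') :=
    fun c => (QuotientAddGroup.mk ((U c : (↥R')ˣ) : ↥R'), Quot.mk _ (res c.out)) with hF_def
  have hFinj : Function.Injective F := by
    intro c₁ c₂ hF12
    have h1 : (QuotientAddGroup.mk ((U c₁ : (↥R')ˣ) : ↥R') : ↥R' ⧸ S)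
        = QuotientAddGroup.mk ((U c₂ : (↥R')ˣ) : ↥R') := congrArg Prod.fst hF12
    have h2 : Quot.mk (ConjRel ↥Γ' ↥R') (res c₁.out) = Quot.mk (ConjRel ↥Γ' ↥R') (res c₂.out) :=
      congrArg Prod.snd hF12
    -- extract `r` with `u₂ = u₁ + d • r`
    have h1' : -((U c₁ : (↥R')ˣ) : ↥R') + ((U c₂ : (↥R')ˣ) : ↥R') ∈ S :=
      (QuotientAddGroup.eq).1 h1
    rw [hS_def] at h1'
    obtain ⟨r, hr⟩ := h1'
    have hr' : ((U c₂ : (↥R')ˣ) : ↥R') = ((U c₁ : (↥R')ˣ) : ↥R') + d • r := by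
      have : d • r = -((U c₁ : (↥R')ˣ) : ↥R') + ((U c₂ : (↥R')ˣ) : ↥R') := by
        simpa using hr
      rw [this, add_neg_cancel_left]
    -- notation in Ω
    set u₁ : Ω := (((U c₁ : (↥R')ˣ) : ↥R') : Ω) with hu₁def
    set v₁ : Ω := ((((U c₁)⁻¹ : (↥R')ˣ) : ↥R') : Ω) with hv₁def
    set u₂ : Ω := (((U c₂ : (↥R')ˣ) : ↥R') : Ω) with hu₂def
    set v₂ : Ω := ((((U c₂)⁻¹ : (↥R')ˣ) : ↥R') : Ω) with hv₂def
    have hu₁v₁ : u₁ * v₁ = 1 := by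
      rw [hu₁def, hv₁def, ← Subring.coe_mul, (U c₁).mul_inv, OneMemClass.coe_one]
    have hv₁u₁ : v₁ * u₁ = 1 := by
      rw [hu₁def, hv₁def, ← Subring.coe_mul, (U c₁).inv_mul, OneMemClass.coe_one]
    have hu₂v₂ : u₂ * v₂ = 1 := by
      rw [hu₂def, hv₂def, ← Subring.coe_mul, (U c₂).mul_inv, OneMemClass.coe_one]
    have hv₂u₂ : v₂ * u₂ = 1 := by
      rw [hu₂def, hv₂def, ← Subring.coe_mul, (U c₂).inv_mul, OneMemClass.coe_one]
    have hu₂eq : u₂ = u₁ + (d : Ω) * (r : Ω) := by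
      have := congrArg Subtype.val hr'
      simpa [nsmul_eq_mul] using this
    -- the conjugating unit in R
    set w : Ω := u₂ * v₁ with hwdef
    set winv : Ω := u₁ * v₂ with hwinvdef
    have hwR : w ∈ R := by
      have hw1 : w = 1 + (d : Ω) * ((r : Ω) * v₁) := by
        rw [hwdef, hu₂eq, add_mul, hu₁v₁, mul_assoc]
      rw [hw1]
      exact R.add_mem R.one_mem (hdR' _ (R'.mul_mem r.2 (((U c₁)⁻¹ : (↥R')ˣ) : ↥R').2))
    have hwinvR : winv ∈ R := by
      have hw2 : winv = 1 - (d : Ω) * ((r : Ω) * v₂) := by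
        have hu₁eq : u₁ = u₂ - (d : Ω) * (r : Ω) := by rw [hu₂eq, add_sub_cancel_right]
        rw [hwinvdef, hu₁eq, sub_mul, hu₂v₂, mul_assoc]
      rw [hw2]
      exact R.sub_mem R.one_mem (hdR' _ (R'.mul_mem r.2 (((U c₂)⁻¹ : (↥R')ˣ) : ↥R').2))
    have hwwinv : w * winv = 1 := by
      rw [hwdef, hwinvdef, mul_assoc, ← mul_assoc v₁, hv₁u₁, one_mul, hu₂v₂]
    have hwinvw : winv * w = 1 := by
      rw [hwdef, hwinvdef, mul_assoc, ← mul_assoc v₂, hv₂u₂, one_mul, hu₁v₁]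
    set W : (↥R)ˣ :=
      ⟨⟨w, hwR⟩, ⟨winv, hwinvR⟩, Subtype.ext hwwinv, Subtype.ext hwinvw⟩ with hWdef
    -- key computation: d · ρᵢ(γ) in terms of σ
    set σ := (Quot.mk (ConjRel ↥Γ' ↥R') (res c₁.out)).out with hσdef
    have hU₁ := hU c₁
    have hU₂ := hU c₂
    rw [← h2] at hU₂
    rw [← hσdef] at hU₁ hU₂
    have key : ∀ (ρ : ↥Γ →+* ↥R) (u : (↥R')ˣ),
        (∀ a, res ρ a = ↑u * σ a * ↑u⁻¹) → ∀ γ : ↥Γ,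
        (d : Ω) * ((ρ γ : ↥R) : Ω)
          = ((u : ↥R') : Ω) * ((σ ⟨(d : L) * ↑γ, hdΓ' γ⟩ : ↥R') : Ω) * (((u⁻¹ : (↥R')ˣ) : ↥R') : Ω) := by
      intro ρ u hu γ
      set a : ↥Γ' := ⟨(d : L) * ↑γ, hdΓ' γ⟩ with hadef
      have hinc : Subring.inclusion hle a = (d : ℕ) • γ := by
        apply Subtype.ext
        show (d : L) * ↑γ = ((d : ℕ) • γ : ↥Γ).1
        simp [nsmul_eq_mul]
      have h3 : ((res ρ a : ↥R') : Ω) = (d : Ω) * ((ρ γ : ↥R) : Ω) := by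
        rw [hres, hinc, map_nsmul]
        simp [nsmul_eq_mul]
      have h4 := congrArg Subtype.val (hu a)
      rw [← h3]
      simpa using h4
    have key₁ := key c₁.out (U c₁) hU₁
    have key₂ := key c₂.out (U c₂) hU₂
    -- conclude conjugacy of the two chosen representatives
    have hconj : ConjRel ↥Γ ↥R c₁.out c₂.out := by
      refine ⟨W, fun γ => ?_⟩
      apply Subtype.ext
      show ((c₂.out γ : ↥R) : Ω) = w * ((c₁.out γ : ↥R) : Ω) * winv
      apply cancel
      set s : Ω := ((σ ⟨(d : L) * ↑γ, hdΓ' γ⟩ : ↥R') : Ω) with hsdef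
      have e₁ : (d : Ω) * ((c₁.out γ : ↥R) : Ω) = u₁ * s * v₁ := key₁ γ
      have e₂ : (d : Ω) * ((c₂.out γ : ↥R) : Ω) = u₂ * s * v₂ := key₂ γ
      have h5 : w * u₁ = u₂ := by rw [hwdef, mul_assoc, hv₁u₁, mul_one]
      have h6 : v₁ * winv = v₂ := by rw [hwinvdef, ← mul_assoc, hv₁u₁, one_mul]
      calc (d : Ω) * ((c₂.out γ : ↥R) : Ω) = u₂ * s * v₂ := e₂
        _ = (w * u₁) * s * (v₁ * winv) := by rw [h5, h6]
        _ = w * (u₁ * s * v₁) * winv := by simp only [mul_assoc]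
        _ = w * ((d : Ω) * ((c₁.out γ : ↥R) : Ω)) * winv := by rw [← e₁]
        _ = (w * (d : Ω)) * ((c₁.out γ : ↥R) : Ω) * winv := by
              rw [← mul_assoc w (d : Ω) (((c₁.out γ : ↥R) : Ω))]
        _ = ((d : Ω) * w) * ((c₁.out γ : ↥R) : Ω) * winv := by
              rw [← (Nat.cast_commute d w).eq]
        _ = (d : Ω) * (w * ((c₁.out γ : ↥R) : Ω) * winv) := by simp only [mul_assoc]
    calc c₁ = Quot.mk _ c₁.out := (Quot.out_eq c₁).symm
      _ = Quot.mk _ c₂.out := Quot.sound hconj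
      _ = c₂ := Quot.out_eq c₂
  -- cardinal arithmetic
  have hmk := Cardinal.mk_le_of_injective hFinj
  rw [Cardinal.mk_prod, Cardinal.lift_umax.{u, v}, Cardinal.lift_id'.{u, v}] at hmk
  exact hmk
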